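/- Let n > 5f. If some honest server accepts transaction t on the fast path (observing > (n+3f)/2 acknowledgements for t) and the underlying consensus instance satisfies validity (if all honest servers propose the same value, that value is decided), then the consensus instance, if invoked, decides t; hence no honest server accepts a transaction conflicting with t (Agreement of Consensus on Demand). -/
import Mathlib


theorem cod_agreement {α T : Type*} [DecidableEq α] [DecidableEq T]
    (n f : ℕ) (h : n > 5 * f)
    (Srv : Finset α) (hSrv : Srv.card = n)
    (B : Finset α) (hB : B ⊆ Srv) (hBcard : B.card ≤ f)
    (ack : α → T) (t : T)
    -- fast path: some honest server observes > (n+3f)/2 acknowledgements for t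
    (A : Finset α) (hA : A ⊆ Srv)
    (hAack : ∀ s ∈ A \ B, ack s = t)
    (hAcard : ((A.card : ℚ)) > ((n : ℚ) + 3 * f) / 2)
    -- each honest server q falling back to consensus collects a quorum Q q
    -- of at least n - f acknowledgements and proposes a plurality value
    (Q : α → Finset α) (hQ : ∀ q ∈ Srv \ B, Q q ⊆ Srv ∧ (Q q).card ≥ n - f)
    (propose : α → T)
    (hplur : ∀ q ∈ Srv \ B, ∀ v : T,
      ((Q q).filter (fun s => ack s = v)).card ≤
        ((Q q).filter (fun s => ack s = propose q)).card)
    -- the underlying consensus satisfies validity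
    (decide : T)
    (validity : ∀ v : T, (∀ q ∈ Srv \ B, propose q = v) → decide = v) :
    decide = t := by
  apply validity
  intro q hq
  obtain ⟨hQsub, hQcard⟩ := hQ q hq
  set Qq := Q q with hQq
  -- honest members of A within the quorum all ack t
  have hHsub : (A ∩ Qq) \ B ⊆ Qq.filter (fun s => ack s = t) := by
    intro s hs
    simp only [Finset.mem_sdiff, Finset.mem_inter] at hs
    exact Finset.mem_filter.mpr ⟨hs.1.2, hAack s (Finset.mem_sdiff.mpr ⟨hs.1.1, hs.2⟩)⟩
  set ct := (Qq.filter (fun s => ack s = t)).card with hct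
  -- card (A ∩ Qq) ≥ card A + card Qq - n
  have hunion : (A ∪ Qq).card ≤ n := by
    rw [← hSrv]; exact Finset.card_le_card (Finset.union_subset hA hQsub)
  have hiu : (A ∩ Qq).card + (A ∪ Qq).card = A.card + Qq.card :=
    Finset.card_inter_add_card_union A Qq
  have hinter : (A ∩ Qq).card + n ≥ A.card + Qq.card := by omega
  -- removing Byzantine members loses at most f
  have hsd : ((A ∩ Qq) \ B).card + f ≥ (A ∩ Qq).card := by
    have := Finset.card_le_card_sdiff_add_card (s := A ∩ Qq) (t := B)
    have h2 : ((A ∩ Qq) \ B).card + B.card ≥ (A ∩ Qq).card := this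
    omega
  have hctH : ct ≥ ((A ∩ Qq) \ B).card := Finset.card_le_card hHsub
  -- so ct + n + f ≥ A.card + Qq.card  (all in ℕ)
  have hkey : ct + n + f ≥ A.card + Qq.card := by omega
  have hnf : Qq.card + f ≥ n := by omega
  -- pass to ℚ : ct > Qq.card / 2
  have hctQ : (ct : ℚ) > (Qq.card : ℚ) / 2 := by
    have h1 : (ct : ℚ) + n + f ≥ (A.card : ℚ) + Qq.card := by exact_mod_cast hkey
    have h2 : (Qq.card : ℚ) + f ≥ n := by exact_mod_cast hnf
    linarith
  -- strict majority: propose q must equal t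
  by_contra hne
  have hp := hplur q hq t
  rw [← hQq] at hp
  set cp := (Qq.filter (fun s => ack s = propose q)).card with hcp
  have hdisj : Disjoint (Qq.filter (fun s => ack s = t))
      (Qq.filter (fun s => ack s = propose q)) := by
    rw [Finset.disjoint_left]
    intro s hs1 hs2
    rw [Finset.mem_filter] at hs1 hs2
    exact hne (hs1.2 ▸ hs2.2).symm
  have hsum : ct + cp ≤ Qq.card := by
    rw [hct, hcp, ← Finset.card_union_of_disjoint hdisj]
    exact Finset.card_le_card (Finset.union_subset (Finset.filter_subset _ _)
      (Finset.filter_subset _ _))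
  have hcpQ : (ct : ℚ) ≤ cp := by exact_mod_cast hp
  have hsumQ : (ct : ℚ) + cp ≤ Qq.card := by exact_mod_cast hsum
  linarith
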